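/- The function g₁(p) = e^{-(p-1)} (p-1)^{p-1} / Γ(p) for p > 1, with g₁(1) = 1, is decreasing in p on [1,∞). -/

import Mathlib

open Real Set

private lemma gamma_ne_zero_of_one_le {p : ℝ} (hp : 1 ≤ p) : Real.Gamma p ≠ 0 :=
  (Real.Gamma_pos_of_pos (lt_of_lt_of_le one_pos hp)).ne'

private lemma gamma_diff {p : ℝ} (hp : 1 ≤ p) : DifferentiableAt ℝ Real.Gamma p := by
  apply Real.differentiableAt_Gamma
  intro m
  have : (0:ℝ) ≤ m := Nat.cast_nonneg m
  nlinarith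

/-- The key digamma-type inequality via log-convexity of Γ. -/
private lemma key_ineq {p : ℝ} (hp : 1 < p) :
    Real.log (p - 1) ≤ deriv Real.Gamma p / Real.Gamma p := by
  have hp0 : (0:ℝ) < p := lt_trans one_pos hp
  have hp1 : (0:ℝ) < p - 1 := by linarith
  have hΓd := gamma_diff hp.le
  have hΓp := Real.Gamma_pos_of_pos hp0
  have hlogd : HasDerivAt (fun x => Real.log (Real.Gamma x))
      (deriv Real.Gamma p / Real.Gamma p) p :=
    hΓd.hasDerivAt.log hΓp.ne'
  have hconv := Real.convexOn_log_Gamma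
  have hslope := hconv.slope_le_of_hasDerivAt (x := p - 1) (y := p)
    (mem_Ioi.2 hp1) (mem_Ioi.2 hp0) (by linarith)
    (by exact hlogd)
  refine le_trans (le_of_eq ?_) hslope
  have hΓadd : Real.Gamma p = (p - 1) * Real.Gamma (p - 1) := by
    have := Real.Gamma_add_one hp1.ne'
    rwa [show p - 1 + 1 = p by ring] at this
  rw [slope_def_field, Function.comp_apply, Function.comp_apply, hΓadd,
    Real.log_mul hp1.ne' (Real.Gamma_pos_of_pos hp1).ne']
  field_simp
  ring

/-- log of g₁ -/
private noncomputable def phi (p : ℝ) : ℝ :=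
  -(p - 1) + (p - 1) * Real.log (p - 1) - Real.log (Real.Gamma p)

private lemma phi_hasDeriv {p : ℝ} (hp : 1 < p) :
    HasDerivAt phi (Real.log (p - 1) - deriv Real.Gamma p / Real.Gamma p) p := by
  have hp1 : (0:ℝ) < p - 1 := by linarith
  have h1 : HasDerivAt (fun x : ℝ => x - 1) 1 p := (hasDerivAt_id p).sub_const 1
  have h2 : HasDerivAt (fun x : ℝ => (x - 1) * Real.log (x - 1))
      ((Real.log (p - 1) + 1) * 1) p :=
    (Real.hasDerivAt_mul_log hp1.ne').comp (h₂ := fun x : ℝ => x * Real.log x) p h1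
  have h3 : HasDerivAt (fun x : ℝ => Real.log (Real.Gamma x))
      (deriv Real.Gamma p / Real.Gamma p) p :=
    (gamma_diff hp.le).hasDerivAt.log (Real.Gamma_pos_of_pos (by linarith)).ne'
  have := ((h1.neg).add h2).sub h3
  convert this using 1
  all_goals first | rfl | ring

private lemma phi_antitone : AntitoneOn phi (Set.Ici 1) := by
  have hcont : ContinuousOn phi (Set.Ici 1) := by
    intro p hp
    have hp1 : (1:ℝ) ≤ p := hp
    have c1 : Continuous fun x : ℝ => -(x - 1) + (x - 1) * Real.log (x - 1) :=
      (continuous_id.sub continuous_const).neg.add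
        (Real.continuous_mul_log.comp (continuous_id.sub continuous_const))
    have c2 : ContinuousAt (fun x : ℝ => Real.log (Real.Gamma x)) p :=
      (Real.continuousAt_log (gamma_ne_zero_of_one_le hp1)).comp
        (gamma_diff hp1).continuousAt
    exact ((c1.continuousAt).sub c2).continuousWithinAt
  have hint : interior (Set.Ici (1:ℝ)) = Set.Ioi 1 := interior_Ici
  refine antitoneOn_of_deriv_nonpos (convex_Ici 1) hcont ?_ ?_
  · rw [hint]
    intro p hp
    exact ((phi_hasDeriv (mem_Ioi.1 hp)).differentiableAt).differentiableWithinAt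
  · rw [hint]
    intro p hp
    rw [(phi_hasDeriv (mem_Ioi.1 hp)).deriv]
    have := key_ineq (mem_Ioi.1 hp)
    linarith

private lemma g_eq_exp_phi {p : ℝ} (hp : 1 ≤ p) :
    Real.exp (-(p - 1)) * (p - 1) ^ (p - 1) / Real.Gamma p = Real.exp (phi p) := by
  have hΓ := Real.Gamma_pos_of_pos (lt_of_lt_of_le one_pos hp)
  have hrpow : (p - 1) ^ (p - 1) = Real.exp ((p - 1) * Real.log (p - 1)) := by
    rcases eq_or_lt_of_le hp with h | h
    · simp [← h]
    · rw [Real.rpow_def_of_pos (by linarith)]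
      ring_nf
  rw [hrpow, phi, ← Real.exp_log hΓ]
  rw [← Real.exp_add, ← Real.exp_sub]
  congr 1
  rw [Real.log_exp]

theorem stmt7 :
    AntitoneOn (fun p : ℝ => Real.exp (-(p - 1)) * (p - 1) ^ (p - 1) / Real.Gamma p)
      (Set.Ici 1) := by
  intro a ha b hb hab
  simp only
  rw [g_eq_exp_phi ha, g_eq_exp_phi hb]
  exact Real.exp_le_exp.2 (phi_antitone ha hb hab)
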